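/- Let G ∈ C¹(ℝ^d, ℝ^d), y ∈ ℝ^d, Φ(x) = (1/2)‖G(x) - y‖², R(x) = (1/2)‖x - m₀‖_{Σ₀}² + c with Σ₀ symmetric positive definite, ε > 0, and suppose x̂ satisfies DΦ(x̂) + εDR(x̂) = 0. Then for all x ∈ ℝ^d, with I(x) := Φ(x) + εR(x) - Φ(x̂) - εR(x̂): I(x) ≥ (1/2)‖G(x) - G(x̂)‖² + (ε/2)‖x - x̂‖_{Σ₀}² - ‖G(x) - G(x̂) - DG(x̂)(x - x̂)‖ · ‖G(x̂) - y‖. -/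

import Mathlib

open MeasureTheory

open scoped RealInnerProductSpace in
private lemma half_normsq_fderiv {E F : Type*} [NormedAddCommGroup E] [NormedSpace ℝ E]
    [NormedAddCommGroup F] [InnerProductSpace ℝ F]
    {f : E → F} {f' : E →L[ℝ] F} {x : E} (hf : HasFDerivAt f f' x) :
    HasFDerivAt (fun x => (1 / 2 : ℝ) * ‖f x‖ ^ 2)
      ((innerSL ℝ (f x)).comp f') x := by
  have h := (hf.inner ℝ hf).const_mul (1 / 2 : ℝ)
  have hfun : (fun x => (1 / 2 : ℝ) * ‖f x‖ ^ 2) = fun x => (1 / 2 : ℝ) * ⟪f x, f x⟫ := by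
    funext z; rw [real_inner_self_eq_norm_sq]
  rw [hfun]
  refine h.congr_fderiv ?_
  ext h
  simp [real_inner_comm]
  ring

set_option maxHeartbeats 1000000 in
theorem It_lower_bound {d : ℕ}
    (G : EuclideanSpace ℝ (Fin d) → EuclideanSpace ℝ (Fin d)) (hG : ContDiff ℝ 1 G)
    (y m₀ : EuclideanSpace ℝ (Fin d)) (c : ℝ)
    (Cov₀ S₀ : Matrix (Fin d) (Fin d) ℝ)
    (hCov₀ : Cov₀.PosDef) (hS₀ : S₀.PosDef) (hSS₀ : S₀ * S₀ = Cov₀⁻¹)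
    (ε : ℝ) (hε : 0 < ε)
    (Φ R : EuclideanSpace ℝ (Fin d) → ℝ)
    (hΦ : ∀ x, Φ x = (1 / 2) * ‖G x - y‖ ^ 2)
    (hR : ∀ x, R x = (1 / 2) * ‖Matrix.toEuclideanLin S₀ (x - m₀)‖ ^ 2 + c)
    (xhat : EuclideanSpace ℝ (Fin d))
    (hstat : fderiv ℝ Φ xhat + ε • fderiv ℝ R xhat = 0)
    (I : EuclideanSpace ℝ (Fin d) → ℝ)
    (hI : ∀ x, I x = Φ x + ε * R x - Φ xhat - ε * R xhat) :
    ∀ x : EuclideanSpace ℝ (Fin d),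
      (1 / 2) * ‖G x - G xhat‖ ^ 2
        + (ε / 2) * ‖Matrix.toEuclideanLin S₀ (x - xhat)‖ ^ 2
        - ‖G x - G xhat - fderiv ℝ G xhat (x - xhat)‖ * ‖G xhat - y‖
      ≤ I x := by
  intro x
  set L : EuclideanSpace ℝ (Fin d) →L[ℝ] EuclideanSpace ℝ (Fin d) :=
    LinearMap.toContinuousLinearMap (Matrix.toEuclideanLin S₀) with hL
  have hLapp : ∀ v, L v = Matrix.toEuclideanLin S₀ v := fun v => rfl
  -- derivative of G
  have hGd : HasFDerivAt G (fderiv ℝ G xhat) xhat :=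
    (hG.differentiable one_ne_zero xhat).hasFDerivAt
  -- derivative of Φ
  have hΦfun : Φ = fun x => (1 / 2 : ℝ) * ‖(fun z => G z - y) x‖ ^ 2 := by
    funext z; simp [hΦ z]
  have hΦd : HasFDerivAt Φ ((innerSL ℝ (G xhat - y)).comp (fderiv ℝ G xhat)) xhat := by
    rw [hΦfun]
    exact half_normsq_fderiv (hGd.sub_const y)
  -- derivative of R
  have hRfun : R = fun x => (1 / 2 : ℝ) * ‖(fun z => L (z - m₀)) x‖ ^ 2 + c := by
    funext z; simp [hR z, hLapp]
  have hLd : HasFDerivAt (fun z => L (z - m₀)) L xhat := by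
    simpa [Function.comp_def] using (L.hasFDerivAt.comp xhat ((hasFDerivAt_id xhat).sub_const m₀))
  have hRd : HasFDerivAt R ((innerSL ℝ (L (xhat - m₀))).comp L) xhat := by
    rw [hRfun]
    exact (half_normsq_fderiv hLd).add_const c
  -- stationarity identity
  have hstat' : ∀ h : EuclideanSpace ℝ (Fin d),
      inner ℝ (G xhat - y) (fderiv ℝ G xhat h) + ε * inner ℝ (L (xhat - m₀)) (L h) = (0 : ℝ) := by
    intro h
    have := congrFun (congrArg DFunLike.coe hstat) h
    rw [ContinuousLinearMap.add_apply, ContinuousLinearMap.smul_apply,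
      ContinuousLinearMap.zero_apply, hΦd.fderiv, hRd.fderiv,
      ContinuousLinearMap.comp_apply, ContinuousLinearMap.comp_apply,
      innerSL_apply_apply, innerSL_apply_apply, smul_eq_mul] at this
    exact this
  -- expansions
  set u := G x - G xhat with hu
  set w := G xhat - y with hw
  set p := L (x - xhat) with hp
  set q := L (xhat - m₀) with hq
  have hGsplit : G x - y = u + w := by simp only [hu, hw]; abel
  have hLsplit : L (x - m₀) = p + q := by
    rw [hp, hq, ← map_add]; congr 1; abel
  have hΦdiff : Φ x - Φ xhat = (1 / 2) * ‖u‖ ^ 2 + inner ℝ u w := by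
    rw [hΦ x, hΦ xhat, hGsplit, ← hw, norm_add_sq_real]
    ring
  have hRdiff : R x - R xhat = (1 / 2) * ‖p‖ ^ 2 + inner ℝ p q := by
    have hx : x - m₀ = (x - xhat) + (xhat - m₀) := by abel
    rw [hR x, hR xhat, ← hLapp, ← hLapp, hx, map_add, ← hp, ← hq, norm_add_sq_real]
    ring
  have hstatx := hstat' (x - xhat)
  have hIeq : I x = (1 / 2) * ‖u‖ ^ 2 + (ε / 2) * ‖p‖ ^ 2
      + inner ℝ (u - fderiv ℝ G xhat (x - xhat)) w := by
    have : (inner ℝ (u - fderiv ℝ G xhat (x - xhat)) w : ℝ)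
        = inner ℝ u w - inner ℝ w (fderiv ℝ G xhat (x - xhat)) := by
      rw [inner_sub_left, real_inner_comm w u, real_inner_comm w (fderiv ℝ G xhat (x - xhat))]
    rw [hI x, this]
    have hqp : inner ℝ p q = inner ℝ (q : EuclideanSpace ℝ (Fin d)) p := real_inner_comm q p
    have hqLp : inner ℝ q (L (x - xhat)) = (inner ℝ q p : ℝ) := rfl
    linear_combination hΦdiff + ε * hRdiff + hstatx - ε * hqLp + ε * hqp
  have hcs : -(‖u - fderiv ℝ G xhat (x - xhat)‖ * ‖w‖)
      ≤ inner ℝ (u - fderiv ℝ G xhat (x - xhat)) w := by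
    have := abs_real_inner_le_norm (u - fderiv ℝ G xhat (x - xhat)) w
    linarith [neg_abs_le (inner ℝ (u - fderiv ℝ G xhat (x - xhat)) w : ℝ)]
  have hpe : ‖Matrix.toEuclideanLin S₀ (x - xhat)‖ = ‖p‖ := rfl
  rw [hpe]
  linarith [hcs, hIeq.ge, hIeq.le]
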